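/- Let d, q > 0 and r₁, r₂, r₃ ≥ 0 with r₁ < r₂. Let A be the 3×3 matrix with rows [−d−q+r₁, 0, d], [0, −d−q+r₂, d], [d+q, d+q, −2d+r₃], and B the 2×2 matrix with rows [−d−q+r₂, 2d], [d+q, −2d+r₃]. Then s(A) < s(B). -/
import Mathlib


open Matrix Polynomial

/-- Spectral bound: maximum real part of the (complex) eigenvalues. -/
noncomputable def specBound {n : ℕ} (M : Matrix (Fin n) (Fin n) ℝ) : ℝ :=
  sSup {t : ℝ | ∃ μ ∈ spectrum ℂ (M.map Complex.ofReal), μ.re = t}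

private lemma mem_spectrum_iff_det {n : ℕ} (M : Matrix (Fin n) (Fin n) ℂ) (μ : ℂ) :
    μ ∈ spectrum ℂ M ↔ (algebraMap ℂ (Matrix (Fin n) (Fin n) ℂ) μ - M).det = 0 := by
  rw [spectrum.mem_iff, Matrix.isUnit_iff_isUnit_det, isUnit_iff_ne_zero, not_not]

private lemma re_inv_le {w : ℂ} {t : ℝ} (ht : 0 < t) (hw : t ≤ w.re) :
    (w⁻¹).re ≤ 1 / t := by
  rw [Complex.inv_re]
  have h1 : 0 < w.re := lt_of_lt_of_le ht hw
  have h2 : w.re ^ 2 ≤ Complex.normSq w := by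
    rw [Complex.normSq_apply]; nlinarith [sq_nonneg w.im]
  have h3 : (0:ℝ) < Complex.normSq w := by nlinarith
  rw [div_le_div_iff₀ h3 ht]
  nlinarith

set_option maxHeartbeats 1600000

/-- Comparison of spectral bounds of the tributary matrix A
and its limiting matrix B. -/
theorem specBound_tributary_lt (d q r₁ r₂ r₃ : ℝ) (hd : 0 < d) (hq : 0 < q)
    (hr₁ : 0 ≤ r₁) (hr₂ : 0 ≤ r₂) (hr₃ : 0 ≤ r₃) (hlt : r₁ < r₂) :
    specBound !![-d - q + r₁, 0, d;
                   0, -d - q + r₂, d;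
                   d + q, d + q, -2 * d + r₃] <
      specBound !![-d - q + r₂, 2 * d; d + q, -2 * d + r₃] := by
  -- basic real constants
  set a : ℝ := -d - q + r₂ with ha
  set c : ℝ := -2 * d + r₃ with hc
  set ρ : ℝ := -d - q + r₁ with hρ
  set K : ℝ := d * (d + q) with hK
  have hKpos : 0 < K := by rw [hK]; positivity
  set D : ℝ := (a - c) ^ 2 + 8 * K with hD
  have hDpos : 0 < D := by rw [hD]; positivity
  set s : ℝ := Real.sqrt D with hs
  have hs2 : s ^ 2 = D := Real.sq_sqrt hDpos.le
  have h0 : s ^ 2 = (a - c) ^ 2 + 8 * K := by rw [hs2, hD]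
  have hsac : a - c < s ∧ c - a < s := by
    constructor <;> nlinarith [Real.sqrt_nonneg D, hs2, hKpos]
  set lamP : ℝ := (a + c + s) / 2 with hlamP
  set lamM : ℝ := (a + c - s) / 2 with hlamM
  have hPa : a < lamP := by rw [hlamP]; linarith [hsac.2]
  have hPc : c < lamP := by rw [hlamP]; linarith [hsac.1]
  have hMP : lamM ≤ lamP := by
    rw [hlamM, hlamP]
    have h := Real.sqrt_nonneg D
    rw [← hs] at h
    linarith
  have hρa : ρ < a := by rw [hρ, ha]; linarith
  have hquad : (lamP - a) * (lamP - c) = 2 * K := by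
    rw [hlamP]; nlinarith [h0]
  -- the B matrix over ℂ
  have hBspec : ∀ μ : ℂ,
      μ ∈ spectrum ℂ ((!![a, 2 * d; d + q, c] :
        Matrix (Fin 2) (Fin 2) ℝ).map Complex.ofReal) ↔ μ = lamM ∨ μ = lamP := by
    intro μ
    rw [mem_spectrum_iff_det]
    have hdet : (algebraMap ℂ (Matrix (Fin 2) (Fin 2) ℂ) μ -
        (!![a, 2 * d; d + q, c] :
          Matrix (Fin 2) (Fin 2) ℝ).map Complex.ofReal).det
        = (μ - (lamM : ℝ)) * (μ - (lamP : ℝ)) := by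
      rw [Matrix.det_fin_two]
      simp only [Matrix.sub_apply, Matrix.map_apply, Matrix.algebraMap_matrix_apply]
      norm_num [Matrix.cons_val_zero, Matrix.cons_val_one, Matrix.head_cons,
        Matrix.head_fin_const]
      rw [hlamM, hlamP, ha, hc]
      have h0' := h0
      rw [ha, hc, hK] at h0'
      have h0C := congrArg Complex.ofReal h0'
      push_cast at h0C
      push_cast
      linear_combination (1/4 : ℂ) * h0C
    rw [hdet, mul_eq_zero, sub_eq_zero, sub_eq_zero]
  have hBspecSet : {t : ℝ | ∃ μ ∈ spectrum ℂ ((!![a, 2 * d; d + q, c] :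
        Matrix (Fin 2) (Fin 2) ℝ).map Complex.ofReal), μ.re = t} = {lamM, lamP} := by
    ext t
    simp only [Set.mem_setOf_eq, Set.mem_insert_iff, Set.mem_singleton_iff]
    constructor
    · rintro ⟨μ, hμ, rfl⟩
      rcases (hBspec μ).1 hμ with rfl | rfl <;> simp [Complex.ofReal_re]
    · rintro (rfl | rfl)
      · exact ⟨lamM, (hBspec _).2 (Or.inl rfl), Complex.ofReal_re _⟩
      · exact ⟨lamP, (hBspec _).2 (Or.inr rfl), Complex.ofReal_re _⟩
  have hB : specBound !![a, 2 * d; d + q, c] = lamP := by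
    rw [specBound, hBspecSet, csSup_pair, sup_eq_right.2 hMP]
  -- characteristic polynomial of A
  have hAspec : ∀ μ : ℂ,
      μ ∈ spectrum ℂ ((!![ρ, 0, d; 0, a, d; d + q, d + q, c] : Matrix (Fin 3) (Fin 3) ℝ).map Complex.ofReal) ↔
      (μ - (ρ:ℝ)) * ((μ - (a:ℝ)) * (μ - (c:ℝ)) - 2 * (K:ℝ)) + (K:ℝ) * ((r₂:ℝ) - (r₁:ℝ)) = 0 := by
    intro μ
    rw [mem_spectrum_iff_det]
    have hdet : (algebraMap ℂ (Matrix (Fin 3) (Fin 3) ℂ) μ -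
        (!![ρ, 0, d; 0, a, d; d + q, d + q, c] : Matrix (Fin 3) (Fin 3) ℝ).map Complex.ofReal).det
        = (μ - (ρ:ℝ)) * ((μ - (a:ℝ)) * (μ - (c:ℝ)) - 2 * (K:ℝ)) + (K:ℝ) * ((r₂:ℝ) - (r₁:ℝ)) := by
      rw [Matrix.det_fin_three]
      simp only [Matrix.sub_apply, Matrix.map_apply, Matrix.algebraMap_matrix_apply]
      norm_num [Matrix.cons_val_zero, Matrix.cons_val_one, Matrix.head_cons,
        Matrix.head_fin_const]
      rw [hρ, ha, hc, hK]
      push_cast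
      ring
    rw [hdet]
  -- every root of the characteristic polynomial of A has real part < lamP
  have hroot : ∀ μ : ℂ,
      (μ - (ρ:ℝ)) * ((μ - (a:ℝ)) * (μ - (c:ℝ)) - 2 * (K:ℝ)) + (K:ℝ) * ((r₂:ℝ) - (r₁:ℝ)) = 0 →
      μ.re < lamP := by
    intro μ hμ
    by_contra hcon
    push_neg at hcon
    set w₁ : ℂ := μ - (ρ:ℝ) with hw₁
    set w₂ : ℂ := μ - (a:ℝ) with hw₂
    have hw₁re : lamP - ρ ≤ w₁.re := by
      rw [hw₁]; simp only [Complex.sub_re, Complex.ofReal_re]; linarith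
    have hw₂re : lamP - a ≤ w₂.re := by
      rw [hw₂]; simp only [Complex.sub_re, Complex.ofReal_re]; linarith
    have hPρ : (0:ℝ) < lamP - ρ := by linarith
    have hPa' : (0:ℝ) < lamP - a := by linarith
    have hw₁ne : w₁ ≠ 0 := by
      intro h; rw [h] at hw₁re; simp at hw₁re; linarith
    have hw₂ne : w₂ ≠ 0 := by
      intro h; rw [h] at hw₂re; simp at hw₂re; linarith
    -- the resolvent identity: K/w₁ + K/w₂ = μ - c
    have hres : (K:ℂ) * w₁⁻¹ + (K:ℂ) * w₂⁻¹ = μ - (c:ℝ) := by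
      have hrel : w₂ = w₁ - ((r₂ : ℂ) - (r₁ : ℂ)) := by
        rw [hw₁, hw₂, hρ, ha]; push_cast; ring
      field_simp
      linear_combination -hμ + (K : ℂ) * hrel
    -- take real parts
    have hre : (K:ℝ) * (w₁⁻¹).re + (K:ℝ) * (w₂⁻¹).re = μ.re - c := by
      have h := congrArg Complex.re hres
      simpa only [Complex.add_re, Complex.sub_re, Complex.ofReal_re,
        Complex.re_ofReal_mul] using h
    have h1 : (w₁⁻¹).re ≤ 1 / (lamP - ρ) := re_inv_le hPρ hw₁re
    have h2 : (w₂⁻¹).re ≤ 1 / (lamP - a) := re_inv_le hPa' hw₂re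
    have hlt1 : 1 / (lamP - ρ) < 1 / (lamP - a) := by
      apply one_div_lt_one_div_of_lt hPa'
      linarith
    have hsum : μ.re - c < 2 * K * (1 / (lamP - a)) := by
      calc μ.re - c = K * (w₁⁻¹).re + K * (w₂⁻¹).re := hre.symm
        _ < K * (1 / (lamP - a)) + K * (1 / (lamP - a)) := by
            have e1 : K * (w₁⁻¹).re < K * (1 / (lamP - a)) :=
              mul_lt_mul_of_pos_left (lt_of_le_of_lt h1 hlt1) hKpos
            have e2 : K * (w₂⁻¹).re ≤ K * (1 / (lamP - a)) :=
              mul_le_mul_of_nonneg_left h2 hKpos.le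
            linarith
        _ = 2 * K * (1 / (lamP - a)) := by ring
    have hfin : 2 * K * (1 / (lamP - a)) = lamP - c := by
      rw [mul_one_div, eq_comm, eq_div_iff (by linarith : lamP - a ≠ 0)]
      linarith [hquad]
    rw [hfin] at hsum
    linarith
  -- the spectrum of A is the root set of an explicit cubic
  set P : Polynomial ℂ := (X - C ((ρ:ℝ):ℂ)) * ((X - C ((a:ℝ):ℂ)) * (X - C ((c:ℝ):ℂ)) -
      C (2 * ((K:ℝ):ℂ))) + C (((K:ℝ):ℂ) * (((r₂:ℝ):ℂ) - ((r₁:ℝ):ℂ))) with hP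
  have hPeval : ∀ μ : ℂ, P.eval μ =
      (μ - (ρ:ℝ)) * ((μ - (a:ℝ)) * (μ - (c:ℝ)) - 2 * (K:ℝ)) + (K:ℝ) * ((r₂:ℝ) - (r₁:ℝ)) := by
    intro μ
    rw [hP]
    simp only [Polynomial.eval_add, Polynomial.eval_mul, Polynomial.eval_sub,
      Polynomial.eval_X, Polynomial.eval_C]
  have hPdeg : P.natDegree = 3 := by
    rw [hP]; compute_degree!
  have hPne : P ≠ 0 := by
    intro h; rw [h] at hPdeg; simp at hPdeg
  have hPex : ∃ μ : ℂ, P.eval μ = 0 := by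
    obtain ⟨x, hx⟩ := Complex.exists_root (f := P) (by
      rw [Polynomial.degree_eq_natDegree hPne, hPdeg]; norm_num)
    exact ⟨x, hx⟩
  -- the set of real parts of eigenvalues of A
  set SA : Set ℝ := {t : ℝ | ∃ μ ∈ spectrum ℂ ((!![ρ, 0, d; 0, a, d; d + q, d + q, c] : Matrix (Fin 3) (Fin 3) ℝ).map Complex.ofReal), μ.re = t}
    with hSA
  have hSAeq : SA = Complex.re '' {μ : ℂ | P.eval μ = 0} := by
    rw [hSA]
    ext t
    simp only [Set.mem_setOf_eq, Set.mem_image]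
    constructor
    · rintro ⟨μ, hμ, rfl⟩
      exact ⟨μ, by rw [hPeval]; exact (hAspec μ).1 hμ, rfl⟩
    · rintro ⟨μ, hμ, rfl⟩
      exact ⟨μ, (hAspec μ).2 (by rw [← hPeval]; exact hμ), rfl⟩
  have hSAfin : SA.Finite := by
    rw [hSAeq]
    exact (Polynomial.finite_setOf_isRoot hPne).image _
  have hSAne : SA.Nonempty := by
    rw [hSAeq]
    obtain ⟨μ, hμ⟩ := hPex
    exact ⟨μ.re, μ, hμ, rfl⟩
  have hmem := hSAne.csSup_mem hSAfin
  rw [hSAeq] at hmem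
  obtain ⟨μ, hμroot, hμre⟩ := hmem
  have hlt' : sSup SA < lamP := by
    rw [hSAeq, ← hμre]
    exact hroot μ (by rw [← hPeval]; exact hμroot)
  have hArfl : specBound !![ρ, 0, d; 0, a, d; d + q, d + q, c] = sSup SA := rfl
  rw [hB, hArfl]
  exact hlt'
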